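/- Let A be maximally dissipative on H with Lagrange identity ⟨Au,v⟩ − ⟨u,Av⟩ = i⟨Γu,Γv⟩_E for u,v ∈ D(A), where Γ : D(A) → E is bounded in the graph norm with dense range. Then for λ ∈ ℂ₊ and μ ∈ ℂ₋ the following Green identity holds as an operator identity on H: (A+λ)^{-1} − (A*+μ)^{-1} + (λ−μ)(A*+μ)^{-1}(A+λ)^{-1} = −i (Γ(A+μ̄)^{-1})* (Γ(A+λ)^{-1}). -/

import Mathlib

open Complex MeasureTheory

noncomputable section

variable {H : Type*} [NormedAddCommGroup H] [InnerProductSpace ℂ H] [CompleteSpace H]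

local notation "⟪" x ", " y "⟫" => @inner ℂ _ _ x y

/-- `A` is dissipative: densely defined with `Im ⟨Au,u⟩ ≥ 0`
(the paper's inner product is linear in the first slot, so `⟨Au,u⟩ = ⟪u, Au⟫` in
Mathlib's convention). -/
def IsDissipative (A : H →ₗ.[ℂ] H) : Prop :=
  Dense (A.domain : Set H) ∧ ∀ u : A.domain, 0 ≤ (⟪(u : H), A u⟫).im

/-- Maximally dissipative: dissipative with no nontrivial dissipative extension. -/
def IsMaxDissipative (A : H →ₗ.[ℂ] H) : Prop :=
  IsDissipative A ∧ ∀ B : H →ₗ.[ℂ] H, IsDissipative B → A ≤ B → B = A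

/-- `R` is the everywhere-defined bounded resolvent `(A - z)⁻¹` of `A`. -/
def IsResolventAt (A : H →ₗ.[ℂ] H) (z : ℂ) (R : H →L[ℂ] H) : Prop :=
  (∀ u : A.domain, R (A u - z • (u : H)) = (u : H)) ∧
  ∀ h : H, ∃ u : A.domain, (u : H) = R h ∧ A u - z • (u : H) = h

/-- First abstract Green identity:
`(A+λ)⁻¹ - (A*+μ)⁻¹ + (λ-μ)(A*+μ)⁻¹(A+λ)⁻¹ = -i (Γ(A+μ̄)⁻¹)* (Γ(A+λ)⁻¹)`. -/
theorem abstract_green_identity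
    {E : Type*} [NormedAddCommGroup E] [InnerProductSpace ℂ E] [CompleteSpace E]
    (A : H →ₗ.[ℂ] H) (hA : IsMaxDissipative A)
    (Γ : A.domain →ₗ[ℂ] E)
    (hΓb : ∃ C : ℝ, ∀ u : A.domain, ‖Γ u‖ ≤ C * (‖(u : H)‖ + ‖A u‖))
    (hΓd : DenseRange Γ)
    (hLag : ∀ u v : A.domain, ⟪(v : H), A u⟫ - ⟪A v, (u : H)⟫ = Complex.I * ⟪Γ v, Γ u⟫)
    (lam mu : ℂ) (hlam : 0 < lam.im) (hmu : mu.im < 0)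
    (Rlam RSmu : H →L[ℂ] H)
    (hRlam : IsResolventAt A (-lam) Rlam)
    (hRSmu : IsResolventAt A.adjoint (-mu) RSmu)
    (Glam Gmuc : H →L[ℂ] E)
    -- `Glam = Γ (A+λ)⁻¹`, `Gmuc = Γ (A+μ̄)⁻¹`
    (hGlam : ∀ u : A.domain, Glam (A u + lam • (u : H)) = Γ u)
    (hGmuc : ∀ u : A.domain, Gmuc (A u + (starRingEnd ℂ mu) • (u : H)) = Γ u)
    (Rmuc : H →L[ℂ] H) (hRmuc : IsResolventAt A (-(starRingEnd ℂ mu)) Rmuc) :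
    Rlam - RSmu + (lam - mu) • (RSmu.comp Rlam)
      = (-Complex.I) • ((ContinuousLinearMap.adjoint Gmuc).comp Glam) := by
  obtain ⟨⟨hAdense, _⟩, _⟩ := hA
  have hadj := LinearPMap.adjoint_isFormalAdjoint (T := A) hAdense
  -- key : RSmu is the adjoint of Rmuc in the weak sense
  have key : ∀ x y : H, ⟪x, RSmu y⟫ = ⟪Rmuc x, y⟫ := by
    intro x y
    obtain ⟨v, hv1, hv2⟩ := hRmuc.2 x
    obtain ⟨w, hw1, hw2⟩ := hRSmu.2 y
    rw [neg_smul, sub_neg_eq_add] at hv2 hw2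
    rw [← hv1, ← hw1, ← hv2, ← hw2]
    have h1 : ⟪(A v : H), (w : H)⟫ = ⟪(v : H), A.adjoint w⟫ := by
      have := hadj w v
      calc ⟪(A v : H), (w : H)⟫ = (starRingEnd ℂ) ⟪(w : H), A v⟫ := by
            rw [inner_conj_symm]
        _ = (starRingEnd ℂ) ⟪(A.adjoint w : H), (v : H)⟫ := by rw [this]
        _ = ⟪(v : H), A.adjoint w⟫ := by rw [inner_conj_symm]
    simp only [inner_add_left, inner_add_right, inner_smul_left, inner_smul_right,
      RingHom.id_apply, starRingEnd_self_apply, h1]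
  ext h
  apply ext_inner_left ℂ
  intro g
  obtain ⟨u, hu1, hu2⟩ := hRlam.2 h
  obtain ⟨v, hv1, hv2⟩ := hRmuc.2 g
  rw [neg_smul, sub_neg_eq_add] at hu2 hv2
  have hGl : Glam h = Γ u := by rw [← hu2]; exact hGlam u
  have hGm : Gmuc g = Γ v := by rw [← hv2]; exact hGmuc v
  have lag := hLag u v
  -- expand both sides
  have lhs1 : ⟪g, Rlam h⟫ = ⟪(A v : H), (u : H)⟫ + mu * ⟪(v : H), (u : H)⟫ := by
    rw [← hu1, ← hv2]
    simp [inner_add_left, inner_smul_left]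
    ring
  have lhs2 : ⟪g, RSmu h⟫ = ⟪(v : H), A u⟫ + lam * ⟪(v : H), (u : H)⟫ := by
    rw [key, ← hv1, ← hu2]
    simp [inner_add_right, inner_smul_right]
  have lhs3 : ⟪g, RSmu (Rlam h)⟫ = ⟪(v : H), (u : H)⟫ := by
    rw [key, ← hv1, ← hu1]
  simp only [ContinuousLinearMap.add_apply, ContinuousLinearMap.sub_apply,
    ContinuousLinearMap.smul_apply, ContinuousLinearMap.coe_comp', Function.comp_apply,
    inner_add_right, inner_sub_right, inner_smul_right]
  rw [lhs1, lhs2, lhs3, hGl, ContinuousLinearMap.adjoint_inner_right, hGm]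
  linear_combination -lag
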